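/- arXiv:2502.01590 — 2 statements merged into one kernel-verified Lean document; each statement's English description precedes it below -/
import Mathlib

section
/- Define the modified SINR as SINR̄_k(W) = |g_kᵀ w_k|² / (∑_{j≠k} |g_kᵀ w_j|² + (σ²/P)∑_j ‖w_j‖²). If W̄ is any nonzero matrix achieving the maximum of ∑_k λ_k log(1 + SINR̄_k(W)) over all W ∈ ℂ^{M×K}, then the scaled matrix W̆ = √(P / tr(W̄ᴴ W̄)) · W̄ satisfies tr(W̆ᴴ W̆) = P and achieves the maximum of ∑_k λ_k log(1 + SINR_k(W)) over all W with tr(Wᴴ W) ≤ P, where SINR_k is the standard SINR with noise σ². -/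
open Finset Matrix

noncomputable def dotc {M : ℕ} (g w : Fin M → ℂ) : ℂ := ∑ m, g m * w m

/-- Standard SINR with noise `σ2`. -/
noncomputable def SINR {M K : ℕ} (g : Fin K → Fin M → ℂ) (σ2 : ℝ)
    (W : Matrix (Fin M) (Fin K) ℂ) (k : Fin K) : ℝ :=
  ‖dotc (g k) (fun m => W m k)‖ ^ 2 /
    (∑ j ∈ univ.filter (· ≠ k), ‖dotc (g k) (fun m => W m j)‖ ^ 2 + σ2)

/-- Modified SINR with noise term `(σ2/P) ∑_j ‖w_j‖²`. -/
noncomputable def SINRbar {M K : ℕ} (g : Fin K → Fin M → ℂ) (σ2 P : ℝ)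
    (W : Matrix (Fin M) (Fin K) ℂ) (k : Fin K) : ℝ :=
  ‖dotc (g k) (fun m => W m k)‖ ^ 2 /
    (∑ j ∈ univ.filter (· ≠ k), ‖dotc (g k) (fun m => W m j)‖ ^ 2 +
      (σ2 / P) * ∑ j, ∑ m, ‖W m j‖ ^ 2)

lemma traceRe {M K : ℕ} (W : Matrix (Fin M) (Fin K) ℂ) :
    ((Wᴴ * W).trace).re = ∑ j, ∑ m, ‖W m j‖ ^ 2 := by
  simp only [Matrix.trace, Matrix.diag, Matrix.mul_apply, Matrix.conjTranspose_apply,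
    Complex.re_sum, Complex.sq_norm]
  congr 1; ext j; congr 1; ext m
  rw [show (star (W m j) : ℂ) = (starRingEnd ℂ) (W m j) from rfl, mul_comm, Complex.mul_conj]
  simp

lemma sum_sq_pos {M K : ℕ} (W : Matrix (Fin M) (Fin K) ℂ) (h : W ≠ 0) :
    0 < ∑ j, ∑ m, ‖W m j‖ ^ 2 := by
  obtain ⟨m, j, hmj⟩ : ∃ m j, W m j ≠ 0 := by
    by_contra hc
    push_neg at hc
    exact h (by ext m j; simpa using hc m j)
  have h1 : (0:ℝ) < ‖W m j‖ ^ 2 :=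
    pow_pos (norm_pos_iff.mpr hmj) 2
  calc (0:ℝ) < ‖W m j‖ ^ 2 := h1
    _ ≤ ∑ m', ‖W m' j‖ ^ 2 :=
        Finset.single_le_sum (f := fun m' => ‖W m' j‖ ^ 2)
          (fun i _ => by positivity) (Finset.mem_univ m)
    _ ≤ ∑ j', ∑ m', ‖W m' j'‖ ^ 2 :=
        Finset.single_le_sum (f := fun j' => ∑ m', ‖W m' j'‖ ^ 2)
          (fun i _ => Finset.sum_nonneg (fun _ _ => by positivity)) (Finset.mem_univ j)

lemma dotc_smul {M : ℕ} (g w : Fin M → ℂ) (c : ℂ) :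
    dotc g (fun m => c * w m) = c * dotc g w := by
  simp [dotc, Finset.mul_sum]; congr 1; ext m; ring

lemma SINRbar_smul {M K : ℕ} (g : Fin K → Fin M → ℂ) (σ2 P : ℝ)
    (W : Matrix (Fin M) (Fin K) ℂ) (c : ℝ) (hc : c ≠ 0) (k : Fin K) :
    SINRbar g σ2 P ((c : ℂ) • W) k = SINRbar g σ2 P W k := by
  unfold SINRbar
  have h1 : ∀ j, ‖dotc (g k) (fun m => ((c:ℂ) • W) m j)‖ ^ 2
      = c^2 * ‖dotc (g k) (fun m => W m j)‖ ^ 2 := by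
    intro j
    have he : (fun m => ((c:ℂ) • W) m j) = fun m => (c:ℂ) * W m j := by
      funext m; simp [Matrix.smul_apply]
    rw [he, dotc_smul]
    simp [norm_mul, mul_pow, Complex.norm_real, sq_abs]
  have h2 : ∀ m j, ‖((c:ℂ) • W) m j‖ ^ 2 = c^2 * ‖W m j‖ ^ 2 := by
    intro m j
    simp [Matrix.smul_apply, norm_mul, mul_pow, Complex.norm_real, sq_abs]
  simp only [h1, h2]
  simp only [← Finset.mul_sum]
  rw [show (σ2 / P) * (c^2 * ∑ j, ∑ m, ‖W m j‖ ^ 2)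
      = c^2 * ((σ2 / P) * ∑ j, ∑ m, ‖W m j‖ ^ 2) by ring,
    ← mul_add, mul_div_mul_left _ _ (pow_ne_zero 2 hc)]

set_option maxHeartbeats 1000000 in
theorem stmt2 {M K : ℕ} (g : Fin K → Fin M → ℂ) (σ2 : ℝ) (hσ : 0 < σ2)
    (P : ℝ) (hP : 0 < P) (lam : Fin K → ℝ) (hlam : ∀ k, 0 ≤ lam k)
    (Wbar : Matrix (Fin M) (Fin K) ℂ) (hWbar : Wbar ≠ 0)
    (hmax : ∀ W : Matrix (Fin M) (Fin K) ℂ,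
      ∑ k, lam k * Real.log (1 + SINRbar g σ2 P W k) ≤
        ∑ k, lam k * Real.log (1 + SINRbar g σ2 P Wbar k)) :
    ((((Real.sqrt (P / ((Wbarᴴ * Wbar).trace).re) : ℂ) • Wbar)ᴴ *
        ((Real.sqrt (P / ((Wbarᴴ * Wbar).trace).re) : ℂ) • Wbar)).trace).re = P ∧
    ∀ W : Matrix (Fin M) (Fin K) ℂ, ((Wᴴ * W).trace).re ≤ P →
      ∑ k, lam k * Real.log (1 + SINR g σ2 W k) ≤
        ∑ k, lam k * Real.log (1 + SINR g σ2
          ((Real.sqrt (P / ((Wbarᴴ * Wbar).trace).re) : ℂ) • Wbar) k) := by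
  have htS : ((Wbarᴴ * Wbar).trace).re = ∑ j, ∑ m, ‖Wbar m j‖ ^ 2 := traceRe Wbar
  have ht0 : 0 < ((Wbarᴴ * Wbar).trace).re := htS ▸ sum_sq_pos Wbar hWbar
  set t : ℝ := ((Wbarᴴ * Wbar).trace).re with ht
  set c : ℝ := Real.sqrt (P / t) with hcdef
  have hc0 : 0 < c := Real.sqrt_pos.mpr (div_pos hP ht0)
  set Wb : Matrix (Fin M) (Fin K) ℂ := (c : ℂ) • Wbar with hWb
  have hSWb : ∑ j, ∑ m, ‖Wb m j‖ ^ 2 = P := by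
    have h2 : ∀ m j, ‖Wb m j‖ ^ 2 = c^2 * ‖Wbar m j‖ ^ 2 := by
      intro m j
      simp [hWb, Matrix.smul_apply, norm_mul, mul_pow, Complex.norm_real, sq_abs]
    simp only [h2, ← Finset.mul_sum]
    rw [← htS, hcdef, Real.sq_sqrt (le_of_lt (div_pos hP ht0)),
      div_mul_cancel₀ _ (ne_of_gt ht0)]
  have htrWb : ((Wbᴴ * Wb).trace).re = P := by rw [traceRe, hSWb]
  refine ⟨htrWb, ?_⟩
  intro W hW
  rw [traceRe] at hW
  -- SINRbar Wb = SINR Wb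
  have hbar_eq : ∀ k, SINRbar g σ2 P Wb k = SINR g σ2 Wb k := by
    intro k
    unfold SINRbar SINR
    rw [hSWb, div_mul_cancel₀ _ (ne_of_gt hP)]
  -- SINR W k ≤ SINRbar W k
  have step1 : ∀ k, SINR g σ2 W k ≤ SINRbar g σ2 P W k := by
    intro k
    by_cases hWz : W = 0
    · subst hWz
      simp [SINR, SINRbar, dotc]
    · unfold SINR SINRbar
      have hSpos : 0 < ∑ j, ∑ m, ‖W m j‖ ^ 2 := sum_sq_pos W hWz
      have hInn : (0:ℝ) ≤ ∑ j ∈ univ.filter (· ≠ k),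
          ‖dotc (g k) (fun m => W m j)‖ ^ 2 :=
        Finset.sum_nonneg (fun _ _ => by positivity)
      have hden2 : (0:ℝ) < (∑ j ∈ univ.filter (· ≠ k),
          ‖dotc (g k) (fun m => W m j)‖ ^ 2) +
          (σ2 / P) * ∑ j, ∑ m, ‖W m j‖ ^ 2 := by positivity
      have hle : (∑ j ∈ univ.filter (· ≠ k),
          ‖dotc (g k) (fun m => W m j)‖ ^ 2) +
          (σ2 / P) * ∑ j, ∑ m, ‖W m j‖ ^ 2 ≤
          (∑ j ∈ univ.filter (· ≠ k),
          ‖dotc (g k) (fun m => W m j)‖ ^ 2) + σ2 := by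
        have h1 : (σ2 / P) * ∑ j, ∑ m, ‖W m j‖ ^ 2 ≤ σ2 := by
          rw [div_mul_eq_mul_div, div_le_iff₀ hP]
          nlinarith
        linarith
      exact div_le_div_of_nonneg_left (by positivity) hden2 hle
  have hSINRnn : ∀ k, 0 ≤ SINR g σ2 W k := by
    intro k
    unfold SINR
    have hInn : (0:ℝ) ≤ ∑ j ∈ univ.filter (· ≠ k),
        ‖dotc (g k) (fun m => W m j)‖ ^ 2 :=
      Finset.sum_nonneg (fun _ _ => by positivity)
    exact div_nonneg (by positivity) (by linarith)
  calc ∑ k, lam k * Real.log (1 + SINR g σ2 W k)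
      ≤ ∑ k, lam k * Real.log (1 + SINRbar g σ2 P W k) := by
        apply Finset.sum_le_sum
        intro k _
        apply mul_le_mul_of_nonneg_left _ (hlam k)
        exact Real.log_le_log (by linarith [hSINRnn k]) (by linarith [step1 k])
    _ ≤ ∑ k, lam k * Real.log (1 + SINRbar g σ2 P Wbar k) := hmax W
    _ = ∑ k, lam k * Real.log (1 + SINR g σ2 Wb k) := by
        apply Finset.sum_congr rfl
        intro k _
        rw [← hbar_eq k, SINRbar_smul g σ2 P Wbar c (ne_of_gt hc0) k]
end

section
/- Lagrangian dual transform for weighted sum-of-log-ratios: for fixed nonnegative signal powers A_k and denominators B_k with 0 ≤ A_k < B_k and weights λ_k ≥ 0, max over ω ∈ [0,∞)^K of ∑_k λ_k (log(1+ω_k) − ω_k + (1+ω_k)A_k/B_k) equals ∑_k λ_k log(1 + A_k/(B_k − A_k)), attained at ω_k⋆ = A_k/(B_k − A_k). -/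
lemma scalar_ineq (a b ω : ℝ) (ha : 0 ≤ a) (hab : a < b) (hω : 0 ≤ ω) :
    Real.log (1 + ω) - ω + (1 + ω) * a / b ≤ Real.log (1 + a / (b - a)) := by
  have hb : 0 < b := lt_of_le_of_lt ha hab
  have hba : 0 < b - a := by linarith
  have hc : (1 : ℝ) + a / (b - a) = b / (b - a) := by field_simp; ring
  rw [hc]
  have h1 : (0:ℝ) < 1 + ω := by linarith
  have hcpos : 0 < b / (b - a) := div_pos hb hba
  have key : Real.log (1 + ω) - Real.log (b / (b - a)) ≤ (1 + ω) * (b - a) / b - 1 := by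
    have := Real.log_le_sub_one_of_pos (show 0 < (1 + ω) / (b / (b - a)) from div_pos h1 hcpos)
    rw [Real.log_div (ne_of_gt h1) (ne_of_gt hcpos)] at this
    have heq : (1 + ω) / (b / (b - a)) = (1 + ω) * (b - a) / b := by field_simp
    linarith [heq ▸ this]
  have : (1 + ω) * (b - a) / b + (1 + ω) * a / b = 1 + ω := by field_simp; ring
  linarith

lemma scalar_eq (a b : ℝ) (ha : 0 ≤ a) (hab : a < b) :
    Real.log (1 + a / (b - a)) - a / (b - a) + (1 + a / (b - a)) * a / b =
      Real.log (1 + a / (b - a)) := by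
  have hb : 0 < b := lt_of_le_of_lt ha hab
  have hba : 0 < b - a := by linarith
  have : (1 + a / (b - a)) * a / b = a / (b - a) := by field_simp; ring
  linarith

theorem stmt17 {K : ℕ} (A B : Fin K → ℝ) (hA : ∀ k, 0 ≤ A k) (hAB : ∀ k, A k < B k)
    (lam : Fin K → ℝ) (hlam : ∀ k, 0 ≤ lam k) :
    (∀ ω : Fin K → ℝ, (∀ k, 0 ≤ ω k) →
      ∑ k, lam k * (Real.log (1 + ω k) - ω k + (1 + ω k) * A k / B k) ≤
        ∑ k, lam k * Real.log (1 + A k / (B k - A k))) ∧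
    (∑ k, lam k * (Real.log (1 + A k / (B k - A k)) - A k / (B k - A k) +
        (1 + A k / (B k - A k)) * A k / B k) =
      ∑ k, lam k * Real.log (1 + A k / (B k - A k))) := by
  constructor
  · intro ω hω
    apply Finset.sum_le_sum
    intro k _
    exact mul_le_mul_of_nonneg_left (scalar_ineq (A k) (B k) (ω k) (hA k) (hAB k) (hω k)) (hlam k)
  · apply Finset.sum_congr rfl
    intro k _
    rw [scalar_eq (A k) (B k) (hA k) (hAB k)]
end
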